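/- The derivative of f_a(x) = x^{a/x} at its fixed point x = a equals 1 − log a; consequently the fixed point x = a is attracting (|f_a'(a)| < 1) exactly when 1 < a < e², and |f_a'(a)| = 1 when a = e². -/

import Mathlib

/-- The derivative of `f_a(x) = x^(a/x) = exp((a/x)·log x)` at its fixed point `x = a`
equals `1 - log a`; consequently the fixed point is attracting (`|f_a'(a)| < 1`)
exactly when `1 < a < e²`, and `|f_a'(a)| = 1` when `a = e²`. -/
theorem stmt_5 (a : ℝ) (ha : 1 < a) :
    HasDerivAt (fun x : ℝ => Real.exp ((a / x) * Real.log x)) (1 - Real.log a) a ∧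
    (|1 - Real.log a| < 1 ↔ 1 < a ∧ a < Real.exp 2) ∧
    (a = Real.exp 2 → |1 - Real.log a| = 1) := by
  have ha0 : (0 : ℝ) < a := lt_trans one_pos ha
  have hane : a ≠ 0 := ne_of_gt ha0
  refine ⟨?_, ?_, ?_⟩
  · have h1 : HasDerivAt (fun x : ℝ => a / x) (-a / a ^ 2) a := by
      have := (hasDerivAt_const a a).div (hasDerivAt_id' (𝕜 := ℝ) a) hane
      convert this using 1
      all_goals first | rfl | ring
    have h2 : HasDerivAt Real.log a⁻¹ a := Real.hasDerivAt_log hane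
    have h3 := (h1.mul h2).exp
    convert h3 using 1
    · rfl
    show _ = Real.exp ((a / a) * Real.log a) * _
    have hlog : Real.exp ((a / a) * Real.log a) = a := by
      rw [div_self hane, one_mul, Real.exp_log ha0]
    rw [hlog]
    field_simp
    ring
  · rw [abs_lt]
    constructor
    · rintro ⟨h1, h2⟩
      refine ⟨ha, ?_⟩
      have h3 : Real.log a < 2 := by linarith
      calc a = Real.exp (Real.log a) := (Real.exp_log ha0).symm
        _ < Real.exp 2 := Real.exp_lt_exp.mpr h3
    · rintro ⟨-, h2⟩
      have hl : 0 < Real.log a := Real.log_pos ha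
      have hu : Real.log a < 2 := Real.exp_lt_exp.mp (by rwa [Real.exp_log ha0])
      constructor <;> linarith
  · intro h
    rw [h, Real.log_exp]
    norm_num
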